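/- arXiv:1602.07583 — 3 statements merged into one kernel-verified Lean document; each statement's English description precedes it below -/
import Mathlib

section
/- Let V be a discriminator variety of finite similarity type (finitely many operation symbols, each of finite arity) that is generated by its finite members as a variety (i.e., every equation valid in all finite members of V is valid in all members of V). Let F be a V-free algebra freely generated by a finite set X, and let ≤ be an equationally definable binary relation on F (i.e., there are terms τ(x,y) and σ'(x,y) in the language of V such that for all a,b ∈ F, a ≤ b iff τ^F(a,b) = σ'^F(a,b)) which is a pre-order (reflexive and transitive). Then ≤ is atomic: writing a < b for (a ≤ b and not b ≤ a), for every a < b in F there exists c ∈ F with a < c ≤ b such that no x ∈ F satisfies a < x < c. -/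
open FirstOrder FirstOrder.Language FirstOrder.Language.Structure

/-- `M` satisfies the set of equations `E` (each equation being a pair of
terms in countably many variables). The variety `V` axiomatized by `E` is the
class of all structures satisfying `ModelsEqs L E`. -/
def ModelsEqs (L : Language) (E : Set (L.Term ℕ × L.Term ℕ))
    (M : Type*) [L.Structure M] : Prop :=
  ∀ e ∈ E, ∀ v : ℕ → M, e.1.realize v = e.2.realize v

/-- A congruence of an `L`-structure: an equivalence relation compatible with
all the operations. -/
def IsCongruence (L : Language) (M : Type*) [L.Structure M]
    (c : M → M → Prop) : Prop :=
  Equivalence c ∧ ∀ (n : ℕ) (f : L.Functions n) (a b : Fin n → M),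
    (∀ i, c (a i) (b i)) → c (funMap f a) (funMap f b)

/-- A structure is subdirectly irreducible if among its congruences distinct
from the identity relation there is a least one. -/
def SubdirectlyIrreducible (L : Language) (M : Type*) [L.Structure M] : Prop :=
  ∃ c : M → M → Prop, IsCongruence L M c ∧ c ≠ Eq ∧
    ∀ d : M → M → Prop, IsCongruence L M d → d ≠ Eq → ∀ x y, c x y → d x y

universe u v

namespace AtomicAux

variable {L : Language}

/-- the definable relation at a coordinate -/
def relAt (τ σ' : L.Term (Fin 2)) {N : Type*} [L.Structure N] (u w : N) : Prop :=
  τ.realize ![u, w] = σ'.realize ![u, w]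

theorem comp_pair {A B : Type*} (g : A → B) (u w : A) : g ∘ ![u, w] = ![g u, g w] := by
  funext i; fin_cases i <;> rfl

theorem comp_quad {A B : Type*} (g : A → B) (p q r s : A) :
    g ∘ ![p, q, r, s] = ![g p, g q, g r, g s] := by
  funext i; fin_cases i <;> rfl

theorem realize_pair_map {A B : Type*} [L.Structure A] [L.Structure B] (g : A →[L] B)
    (t : L.Term (Fin 2)) (u w : A) : t.realize ![g u, g w] = g (t.realize ![u, w]) := by
  rw [← comp_pair ⇑g, HomClass.realize_term]

theorem realize_quad_map {A B : Type*} [L.Structure A] [L.Structure B] (g : A →[L] B)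
    (t : L.Term (Fin 4)) (p q r s : A) :
    t.realize ![g p, g q, g r, g s] = g (t.realize ![p, q, r, s]) := by
  rw [← comp_quad ⇑g, HomClass.realize_term]

theorem relAt_map {A B : Type*} [L.Structure A] [L.Structure B] {τ σ' : L.Term (Fin 2)}
    (g : A →[L] B) {u w : A} (h : relAt τ σ' u w) : relAt τ σ' (g u) (g w) := by
  unfold relAt at *
  rw [realize_pair_map, realize_pair_map, h]

theorem relAt_map_iff {A B : Type*} [L.Structure A] [L.Structure B] {τ σ' : L.Term (Fin 2)}
    (g : A →[L] B) (hg : Function.Injective ⇑g) (u w : A) :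
    relAt τ σ' (g u) (g w) ↔ relAt τ σ' u w := by
  constructor
  · intro h
    unfold relAt at *
    rw [realize_pair_map, realize_pair_map] at h
    exact hg h
  · exact relAt_map g

theorem modelsEqs_of_surjective {A B : Type*} [L.Structure A] [L.Structure B]
    {E : Set (L.Term ℕ × L.Term ℕ)}
    (hA : ModelsEqs L E A) (g : A →[L] B) (hg : Function.Surjective ⇑g) :
    ModelsEqs L E B := by
  intro e he v
  choose v' hv' using fun n => hg (v n)
  have hv : v = ⇑g ∘ v' := by funext n; simp [hv' n]
  rw [hv, HomClass.realize_term, HomClass.realize_term, hA e he v']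

theorem modelsEqs_substructure {A : Type*} [L.Structure A] {E : Set (L.Term ℕ × L.Term ℕ)}
    (hA : ModelsEqs L E A) (S : L.Substructure A) : ModelsEqs L E S := by
  intro e he v
  apply Subtype.coe_injective
  have h1 := HomClass.realize_term (L := L) S.subtype (t := e.1) (v := v)
  have h2 := HomClass.realize_term (L := L) S.subtype (t := e.2) (v := v)
  simp only [Substructure.coe_subtype] at h1 h2
  show (↑(Term.realize v e.1) : A) = ↑(Term.realize v e.2)
  rw [← h1, ← h2, hA e he]

/-- Packaged "normalized witness": a finite subdirectly irreducible model of `E`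
together with a surjective hom from `F` at which `relAt τ σ'` fails on `(u, w)`. -/
structure Witness (L : Language) (E : Set (L.Term ℕ × L.Term ℕ)) (τ σ' : L.Term (Fin 2))
    {F : Type u} [L.Structure F] (u w : F) where
  N : Type u
  [str : L.Structure N]
  fin : Finite N
  models : ModelsEqs L E N
  si : SubdirectlyIrreducible L N
  g : F →[L] N
  surj : Function.Surjective ⇑g
  bad : ¬ relAt τ σ' (g u) (g w)

attribute [instance] Witness.str

theorem exists_witness
    (hnorel : ∀ n, IsEmpty (L.Relations n))
    {E : Set (L.Term ℕ × L.Term ℕ)}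
    (hgenfin : ∀ t s : L.Term ℕ,
      (∀ (M : Type u) [L.Structure M], Finite M → ModelsEqs L E M →
        ∀ v : ℕ → M, t.realize v = s.realize v) →
      (∀ (M : Type u) [L.Structure M], ModelsEqs L E M →
        ∀ v : ℕ → M, t.realize v = s.realize v))
    {F : Type u} [L.Structure F] (hF : ModelsEqs L E F)
    {X : Type v} [Finite X] (ι : X → F)
    (hfree : ∀ (A : Type u) [L.Structure A], ModelsEqs L E A →
      ∀ f : X → A, ∃! g : F →[L] A, ∀ x : X, g (ι x) = f x)
    (hrep : ∀ u : F, ∃ t : L.Term X, t.realize ι = u)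
    (τ σ' : L.Term (Fin 2)) (u w : F)
    (hne : τ.realize ![u, w] ≠ σ'.realize ![u, w]) :
    Nonempty (Witness L E τ σ' u w) := by
  classical
  obtain ⟨t, ht⟩ := hrep (τ.realize ![u, w])
  obtain ⟨s, hs⟩ := hrep (σ'.realize ![u, w])
  obtain ⟨eX, heX⟩ := Countable.exists_injective_nat X
  by_cases hvalid : ∀ (M : Type u) [L.Structure M], Finite M → ModelsEqs L E M →
      ∀ v : ℕ → M, (t.relabel eX).realize v = (s.relabel eX).realize v
  · exfalso
    have hv := hgenfin (t.relabel eX) (s.relabel eX) hvalid F hF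
    set vF : ℕ → F := fun n => if hx : ∃ x, eX x = n then ι hx.choose else τ.realize ![u, w]
      with hvF
    have hcomp : vF ∘ eX = ι := by
      funext x
      have hx : ∃ x', eX x' = eX x := ⟨x, rfl⟩
      simp only [hvF, Function.comp_apply, dif_pos hx]
      exact congrArg ι (heX hx.choose_spec)
    have h1 : (t.relabel eX).realize vF = τ.realize ![u, w] := by
      rw [Term.realize_relabel, hcomp, ht]
    have h2 : (s.relabel eX).realize vF = σ'.realize ![u, w] := by
      rw [Term.realize_relabel, hcomp, hs]
    rw [← h1, ← h2] at hne
    exact hne (hv vF)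
  · push_neg at hvalid
    obtain ⟨M, iM, hMfin, hME, v, hv⟩ := hvalid
    obtain ⟨g₁, hg₁, -⟩ := hfree M hME (v ∘ eX)
    have hg₁ι : ⇑g₁ ∘ ι = v ∘ eX := funext hg₁
    have key : ∀ tt : L.Term X, g₁ (tt.realize ι) = (tt.relabel eX).realize v := by
      intro tt
      rw [← HomClass.realize_term g₁ (t := tt) (v := ι), hg₁ι, Term.realize_relabel]
    have hsep : g₁ (τ.realize ![u, w]) ≠ g₁ (σ'.realize ![u, w]) := by
      rw [← ht, ← hs, key t, key s]; exact hv
    haveI := hMfin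
    set B := g₁.range with hB
    set g₂ : F →[L] ↥B := Hom.codRestrict g₁.range g₁ (fun c => Hom.mem_range_self g₁ c) with hg₂
    have hg₂surj : Function.Surjective ⇑g₂ := by
      rintro ⟨x, hx⟩
      obtain ⟨y, rfl⟩ := Hom.mem_range.1 hx
      exact ⟨y, rfl⟩
    have hBE : ModelsEqs L E ↥B := modelsEqs_substructure hME _
    have hbad₂ : ¬ relAt τ σ' (g₂ u) (g₂ w) := by
      intro hr
      have hr' := relAt_map (L := L) B.subtype.toHom hr
      have e1 : (B.subtype.toHom) (g₂ u) = g₁ u := rfl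
      have e2 : (B.subtype.toHom) (g₂ w) = g₁ w := rfl
      rw [e1, e2] at hr'
      unfold relAt at hr'
      rw [realize_pair_map g₁ τ u w, realize_pair_map g₁ σ' u w] at hr'
      exact hsep hr'
    set p := τ.realize ![g₂ u, g₂ w] with hp
    set q := σ'.realize ![g₂ u, g₂ w] with hq
    have hpq : p ≠ q := hbad₂
    set CS : Set (↥B → ↥B → Prop) := {c | IsCongruence L (↥B) c ∧ ¬ c p q} with hCS
    have hEqmem : (Eq : ↥B → ↥B → Prop) ∈ CS :=
      ⟨⟨eq_equivalence, fun n fo a b hab => congrArg _ (funext hab)⟩, hpq⟩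
    obtain ⟨θ, hθCS, hθmax⟩ :=
      Set.Finite.exists_maximalFor id CS (Set.toFinite _) ⟨_, hEqmem⟩
    obtain ⟨hθcong, hθpq⟩ := hθCS
    letI st : Setoid ↥B := ⟨θ, hθcong.1⟩
    letI QS : L.Structure (Quotient st) :=
      { funMap := fun {n} fo vv => ⟦funMap fo (fun i => (vv i).out)⟧
        RelMap := fun {n} r _ => (hnorel n).elim r }
    have hmapfun : ∀ {n : ℕ} (fo : L.Functions n) (a : Fin n → ↥B),
        (⟦funMap fo a⟧ : Quotient st) = funMap fo (fun i => ⟦a i⟧) := by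
      intro n fo a
      show _ = ⟦funMap fo (fun i => (⟦a i⟧ : Quotient st).out)⟧
      exact Quotient.sound (hθcong.2 n fo a _ (fun i => hθcong.1.symm (Quotient.mk_out (a i))))
    letI π : ↥B →[L] Quotient st :=
      { toFun := Quotient.mk st
        map_fun' := fun {n} fo a => hmapfun fo a
        map_rel' := fun {n} r _ _ => ((hnorel n).false r).elim }
    have hπsurj : Function.Surjective ⇑π := fun z => ⟨z.out, Quotient.out_eq z⟩
    have hQE : ModelsEqs L E (Quotient st) := modelsEqs_of_surjective hBE π hπsurj
    have hQfin : Finite (Quotient st) := Quotient.finite st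
    have hπpq : ¬ (π p = π q) := fun hh => hθpq (Quotient.exact hh)
    have hSI : SubdirectlyIrreducible L (Quotient st) := by
      refine ⟨fun x y => ∀ d : Quotient st → Quotient st → Prop,
        IsCongruence L (Quotient st) d → d (π p) (π q) → d x y,
        ⟨⟨fun x d hd _ => hd.1.refl x,
          fun h d hd hpq' => hd.1.symm (h d hd hpq'),
          fun h1 h2 d hd hpq' => hd.1.trans (h1 d hd hpq') (h2 d hd hpq')⟩,
         fun n fo a b hab d hd hpq' => hd.2 n fo a b fun i => hab i d hd hpq'⟩,
        ?_, ?_⟩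
      · intro hEq
        apply hπpq
        have h1 : ∀ d, IsCongruence L (Quotient st) d → d (π p) (π q) → d (π p) (π q) :=
          fun d _ h => h
        have h2 := congrFun (congrFun hEq (π p)) (π q)
        rw [h2] at h1
        exact h1
      · intro d hd hdne x y hxy
        apply hxy d hd
        have hd' : IsCongruence L (↥B) (fun x y => d ⟦x⟧ ⟦y⟧) := by
          refine ⟨⟨fun x => hd.1.refl _, fun h => hd.1.symm h,
            fun h1 h2 => hd.1.trans h1 h2⟩, ?_⟩
          intro n fo a b hab
          show d ⟦funMap fo a⟧ ⟦funMap fo b⟧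
          rw [hmapfun fo a, hmapfun fo b]
          exact hd.2 n fo _ _ hab
        by_cases hmem : (fun x y => d ⟦x⟧ ⟦y⟧) ∈ CS
        · exfalso
          have hle : θ ≤ fun x y => d ⟦x⟧ ⟦y⟧ := by
            intro x y hxy'
            have hxy'' : (⟦x⟧ : Quotient st) = ⟦y⟧ := Quotient.sound hxy'
            rw [hxy'']
            exact hd.1.refl _
          have heq := le_antisymm hle (hθmax hmem hle)
          obtain ⟨z1, z2, hz, hzne⟩ : ∃ z1 z2 : Quotient st, d z1 z2 ∧ z1 ≠ z2 := by
            by_contra hno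
            push_neg at hno
            apply hdne
            funext z1 z2
            exact propext ⟨fun h => hno z1 z2 h, fun h => h ▸ hd.1.refl z1⟩
          obtain ⟨w1, rfl⟩ := hπsurj z1
          obtain ⟨w2, rfl⟩ := hπsurj z2
          have : θ w1 w2 := by rw [heq]; exact hz
          exact hzne (Quotient.sound this)
        · simp only [hCS, Set.mem_setOf_eq, not_and, not_not] at hmem
          exact hmem hd'
    have hbadQ : ¬ relAt τ σ' ((π.comp g₂) u) ((π.comp g₂) w) := by
      intro hr
      unfold relAt at hr
      have e1 : (π.comp g₂) u = π (g₂ u) := rfl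
      have e2 : (π.comp g₂) w = π (g₂ w) := rfl
      rw [e1, e2, realize_pair_map π τ (g₂ u) (g₂ w), realize_pair_map π σ' (g₂ u) (g₂ w)] at hr
      exact hπpq hr
    exact ⟨⟨Quotient st, hQfin, hQE, hSI, π.comp g₂, hπsurj.comp hg₂surj, hbadQ⟩⟩

/-- Nested switching-term expression: evaluates (under a hom into an algebra where
`σ` is the discriminator) to `u` if all listed (in)equality conditions hold, else to `v`. -/
def condVal {F : Type*} (σF : F → F → F → F → F) : List (F × F × Bool) → F → F → F
  | [], u, _ => u
  | (p, q, true) :: D, u, v => σF p q (condVal σF D u v) v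
  | (p, q, false) :: D, u, v => σF p q v (condVal σF D u v)

theorem condVal_spec {L : Language} {F N : Type u'} [L.Structure F] [L.Structure N]
    (σ : L.Term (Fin 4)) (g : F →[L] N)
    (hσ : ∀ x y a b : N,
      (x = y → σ.realize ![x, y, a, b] = a) ∧ (x ≠ y → σ.realize ![x, y, a, b] = b))
    (D : List (F × F × Bool)) (u v : F) :
    ((∀ c ∈ D, (g c.1 = g c.2.1 ↔ c.2.2 = true)) →
      g (condVal (fun p q r s => σ.realize ![p, q, r, s]) D u v) = g u) ∧
    ((¬ ∀ c ∈ D, (g c.1 = g c.2.1 ↔ c.2.2 = true)) →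
      g (condVal (fun p q r s => σ.realize ![p, q, r, s]) D u v) = g v) := by
  induction D with
  | nil =>
    exact ⟨fun _ => rfl, fun hn => absurd (fun c hc => absurd hc List.not_mem_nil) hn⟩
  | cons c D ih =>
    obtain ⟨p, q, pol⟩ := c
    cases pol
    · -- pol = false : condVal = σF p q v rest
      have hval : condVal (fun p q r s => σ.realize ![p, q, r, s]) ((p, q, false) :: D) u v
          = σ.realize ![p, q, v, condVal (fun p q r s => σ.realize ![p, q, r, s]) D u v] := rfl
      constructor
      · intro hall
        have hhead := hall (p, q, false) List.mem_cons_self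
        simp only [Bool.false_eq_true, iff_false] at hhead
        have htail := ih.1 fun c hc => hall c (List.mem_cons_of_mem _ hc)
        rw [hval, ← realize_quad_map g σ, (hσ _ _ _ _).2 hhead, htail]
      · intro hnall
        by_cases hpq : g p = g q
        · rw [hval, ← realize_quad_map g σ, (hσ _ _ _ _).1 hpq]
        · have htailfail : ¬ ∀ c ∈ D, (g c.1 = g c.2.1 ↔ c.2.2 = true) := by
            intro hall
            apply hnall
            intro c hc
            rcases List.mem_cons.1 hc with rfl | hc
            · simpa using hpq
            · exact hall c hc
          rw [hval, ← realize_quad_map g σ, (hσ _ _ _ _).2 hpq, ih.2 htailfail]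
    · -- pol = true : condVal = σF p q rest v
      have hval : condVal (fun p q r s => σ.realize ![p, q, r, s]) ((p, q, true) :: D) u v
          = σ.realize ![p, q, condVal (fun p q r s => σ.realize ![p, q, r, s]) D u v, v] := rfl
      constructor
      · intro hall
        have hhead := hall (p, q, true) List.mem_cons_self
        simp only [iff_true] at hhead
        have htail := ih.1 fun c hc => hall c (List.mem_cons_of_mem _ hc)
        rw [hval, ← realize_quad_map g σ, (hσ _ _ _ _).1 hhead, htail]
      · intro hnall
        by_cases hpq : g p = g q
        · have htailfail : ¬ ∀ c ∈ D, (g c.1 = g c.2.1 ↔ c.2.2 = true) := by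
            intro hall
            apply hnall
            intro c hc
            rcases List.mem_cons.1 hc with rfl | hc
            · simpa using hpq
            · exact hall c hc
          rw [hval, ← realize_quad_map g σ, (hσ _ _ _ _).1 hpq, ih.2 htailfail]
        · rw [hval, ← realize_quad_map g σ, (hσ _ _ _ _).2 hpq]

/-- The finite "diagram" condition set for a surjective hom `h : F → M`
with section `f`. -/
def condSet (L : Language) {F M : Type*} [L.Structure F] [L.Structure M] {X : Type*}
    (ι : X → F) (f : M → F) (h : F → M) (Nb : ℕ) : Set (F × F × Bool) :=
  ((⋃ n ∈ Set.Iio Nb, Set.range (fun pr : L.Functions n × (Fin n → M) =>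
      ((f (funMap pr.1 pr.2), funMap pr.1 (f ∘ pr.2), true) : F × F × Bool)))
  ∪ Set.range (fun x : X => ((f (h (ι x)), ι x, true) : F × F × Bool)))
  ∪ (fun pm : M × M => ((f pm.1, f pm.2, false) : F × F × Bool)) '' {pm | pm.1 ≠ pm.2}

theorem condSet_finite (L : Language) {F M : Type*} [L.Structure F] [L.Structure M]
    {X : Type*} [Finite X] [Finite M] (hfinfun : ∀ n, Finite (L.Functions n))
    (ι : X → F) (f : M → F) (h : F → M) (Nb : ℕ) : (condSet L ι f h Nb).Finite := by
  apply Set.Finite.union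
  · apply Set.Finite.union
    · apply Set.Finite.biUnion (Set.finite_Iio Nb)
      intro n _
      haveI := hfinfun n
      exact Set.finite_range _
    · exact Set.finite_range _
  · exact Set.Finite.image _ (Set.toFinite _)

theorem diagram_embed {L : Language}
    (hnorel : ∀ n, IsEmpty (L.Relations n)) (Nb : ℕ)
    (harity : ∀ n, Nb ≤ n → IsEmpty (L.Functions n))
    {E : Set (L.Term ℕ × L.Term ℕ)}
    {F : Type u} [L.Structure F]
    {X : Type v} (ι : X → F)
    (hfree : ∀ (A : Type u) [L.Structure A], ModelsEqs L E A →
      ∀ f : X → A, ∃! g : F →[L] A, ∀ x : X, g (ι x) = f x)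
    {M : Type u} [L.Structure M] (h : F →[L] M) (f : M → F) (hsec : ∀ m, h (f m) = m)
    {N : Type u} [L.Structure N] (hNE : ModelsEqs L E N) (g : F →[L] N)
    (hsat : ∀ c ∈ condSet L ι f ⇑h Nb, (g c.1 = g c.2.1 ↔ c.2.2 = true)) :
    ∃ e : M →[L] N, Function.Injective ⇑e ∧ ∀ z : F, g z = e (h z) := by
  have hmapfun : ∀ {n : ℕ} (fo : L.Functions n) (a : Fin n → M),
      g (f (funMap fo a)) = funMap fo ((⇑g ∘ f) ∘ a) := by
    intro n fo a
    by_cases hn : n < Nb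
    · have hmem : ((f (funMap fo a), funMap fo (f ∘ a), true) : F × F × Bool)
          ∈ condSet L ι f ⇑h Nb := by
        apply Set.mem_union_left
        apply Set.mem_union_left
        exact Set.mem_biUnion (Set.mem_Iio.2 hn) ⟨(fo, a), rfl⟩
      have h1 := (hsat _ hmem).2 rfl
      rw [h1]
      have h2 := g.map_fun fo (f ∘ a)
      rw [h2]
      rfl
    · exact ((harity n (le_of_not_gt hn)).false fo).elim
  have hinj : Function.Injective (⇑g ∘ f) := by
    intro m m' hmm
    by_contra hne
    have hmem : ((f m, f m', false) : F × F × Bool) ∈ condSet L ι f ⇑h Nb :=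
      Set.mem_union_right _ ⟨(m, m'), hne, rfl⟩
    have := (hsat _ hmem).1 hmm
    simp at this
  set e : M →[L] N :=
    { toFun := ⇑g ∘ f
      map_fun' := fun {n} fo a => hmapfun fo a
      map_rel' := fun {n} r _ _ => ((hnorel n).false r).elim } with he
  have hιx : ∀ x : X, (e.comp h) (ι x) = (⇑g ∘ ι) x := by
    intro x
    have hmem : ((f (h (ι x)), ι x, true) : F × F × Bool) ∈ condSet L ι f ⇑h Nb :=
      Set.mem_union_left _ (Set.mem_union_right _ ⟨x, rfl⟩)
    exact (hsat _ hmem).2 rfl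
  obtain ⟨g0, hg0, huniq⟩ := hfree N hNE (⇑g ∘ ι)
  have h1 : e.comp h = g0 := huniq _ hιx
  have h2 : g = g0 := huniq _ fun x => rfl
  refine ⟨e, hinj, fun z => ?_⟩
  rw [h2, ← h1]
  rfl

end AtomicAux

open AtomicAux

/-- In a finitely generated free algebra of a discriminator variety of finite
similarity type that is generated by its finite members, every equationally
definable pre-order is atomic. -/
theorem free_algebra_definable_preorder_atomic
    {L : Language} (E : Set (L.Term ℕ × L.Term ℕ))
    -- finite similarity type: no relation symbols, finitely many operation
    -- symbols, each of finite arity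
    (hnorel : ∀ n, IsEmpty (L.Relations n))
    (hfinfun : ∀ n, Finite (L.Functions n))
    (hfinarity : ∃ N : ℕ, ∀ n, N ≤ n → IsEmpty (L.Functions n))
    -- discriminator variety: there is a switching term for the subdirectly
    -- irreducible members of the variety
    (hdisc : ∃ σ : L.Term (Fin 4),
      ∀ (M : Type u) [L.Structure M], ModelsEqs L E M →
        SubdirectlyIrreducible L M → ∀ x y a b : M,
          (x = y → σ.realize ![x, y, a, b] = a) ∧
          (x ≠ y → σ.realize ![x, y, a, b] = b))
    -- the variety is generated by its finite members: every equation valid in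
    -- all finite members is valid in all members
    (hgenfin : ∀ t s : L.Term ℕ,
      (∀ (M : Type u) [L.Structure M], Finite M → ModelsEqs L E M →
        ∀ v : ℕ → M, t.realize v = s.realize v) →
      (∀ (M : Type u) [L.Structure M], ModelsEqs L E M →
        ∀ v : ℕ → M, t.realize v = s.realize v))
    -- `F` is the `V`-free algebra freely generated by the finite set `X`
    {F : Type u} [L.Structure F] (hF : ModelsEqs L E F)
    {X : Type*} [Finite X] (ι : X → F)
    (hfree : ∀ (A : Type u) [L.Structure A], ModelsEqs L E A →
      ∀ f : X → A, ∃! g : F →[L] A, ∀ x : X, g (ι x) = f x)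
    -- `le` is an equationally definable binary relation on `F`
    (le : F → F → Prop) (τ σ' : L.Term (Fin 2))
    (hdef : ∀ a b : F, le a b ↔ τ.realize ![a, b] = σ'.realize ![a, b])
    -- which is a pre-order
    (hrefl : Reflexive le) (htrans : Transitive le) :
    -- conclusion: `le` is atomic
    ∀ a b : F, (le a b ∧ ¬ le b a) →
      ∃ c : F, (le a c ∧ ¬ le c a) ∧ le c b ∧
        ¬ ∃ x : F, (le a x ∧ ¬ le x a) ∧ (le x c ∧ ¬ le c x) := by
  classical
  obtain ⟨σd, hσd⟩ := hdisc
  obtain ⟨Nb, hNb⟩ := hfinarity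
  -- every element of `F` is a term in the generators
  have hrep : ∀ u : F, ∃ t : L.Term X, t.realize ι = u := by
    have hcl : ∀ u : F, u ∈ Substructure.closure L (Set.range ι) := by
      intro u
      set S := Substructure.closure L (Set.range ι) with hS
      have hSE : ModelsEqs L E ↥S := modelsEqs_substructure hF S
      obtain ⟨g, hg, -⟩ :=
        hfree (↥S) hSE fun x => ⟨ι x, Substructure.subset_closure ⟨x, rfl⟩⟩
      obtain ⟨g0, hg0, huniq⟩ := hfree F hF ι
      have h1 : S.subtype.toHom.comp g = g0 := by
        apply huniq
        intro x
        have hx : (S.subtype.toHom.comp g) (ι x) = ((g (ι x) : ↥S) : F) := rfl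
        rw [hx, hg x]
      have h2 : Hom.id L F = g0 := huniq _ fun x => rfl
      have h3 : ((g u : ↥S) : F) = u :=
        congrArg (fun k : F →[L] F => k u) (h1.trans h2.symm)
      rw [← h3]
      exact (g u).2
    intro u
    obtain ⟨t, ht⟩ := Substructure.mem_closure_iff_exists_term.1 (hcl u)
    set k : ↥(Set.range ι) → X := fun z => z.2.choose with hk
    have hkι : ∀ z : ↥(Set.range ι), ι (k z) = ↑z := fun z => z.2.choose_spec
    refine ⟨t.relabel k, ?_⟩
    rw [Term.realize_relabel, ← ht]
    congr 1
    funext z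
    exact hkι z
  -- soundness of `le` at every coordinate
  have hcoord : ∀ {u w : F}, le u w → ∀ {N : Type u} [L.Structure N] (g : F →[L] N),
      relAt τ σ' (g u) (g w) := by
    intro u w huw N _ g
    exact relAt_map g ((hdef u w).1 huw)
  -- normalized witnesses for failures of `le`
  have hwit : ∀ u w : F, ¬ le u w → Nonempty (Witness L E τ σ' u w) := by
    intro u w hn
    exact exists_witness hnorel hgenfin hF ι hfree hrep τ σ' u w
      fun hh => hn ((hdef u w).2 hh)
  intro a b hab0
  obtain ⟨hab, hnba⟩ := hab0
  obtain ⟨W⟩ := hwit b a hnba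
  haveI := W.fin
  set M := W.N with hM
  set h : F →[L] M := W.g with hh
  set f : M → F := Function.surjInv W.surj with hf
  have hsec : ∀ m, h (f m) = m := fun m => Function.surjInv_eq W.surj m
  have hDfin : (condSet L ι f ⇑h Nb).Finite := condSet_finite L hfinfun ι f ⇑h Nb
  set Dlist : List (F × F × Bool) := hDfin.toFinset.toList with hDlist
  have hmemDlist : ∀ c, c ∈ Dlist ↔ c ∈ condSet L ι f ⇑h Nb := by
    intro c
    rw [hDlist, Finset.mem_toList, Set.Finite.mem_toFinset]
  set C : F → F := fun x => condVal (fun p q r s => σd.realize ![p, q, r, s]) Dlist x a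
    with hC
  -- the base coordinate satisfies the diagram conditions
  have hhsat : ∀ c ∈ Dlist, (h c.1 = h c.2.1 ↔ c.2.2 = true) := by
    intro c hc
    rw [hmemDlist] at hc
    rcases hc with (hc | hc) | hc
    · simp only [Set.mem_iUnion] at hc
      obtain ⟨n, hn, pr, rfl⟩ := hc
      simp only [iff_true]
      rw [hsec, h.map_fun]
      congr 1
      funext i
      exact (hsec (pr.2 i)).symm
    · obtain ⟨x, rfl⟩ := hc
      simp only [iff_true]
      exact hsec _
    · obtain ⟨pm, hpm, rfl⟩ := hc
      simp only [Bool.false_eq_true, iff_false]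
      rw [hsec, hsec]
      exact hpm
  -- evaluation of `C x` at subdirectly irreducible coordinates
  have hCspec : ∀ {N : Type u} [L.Structure N], ModelsEqs L E N →
      SubdirectlyIrreducible L N → ∀ (g : F →[L] N) (x : F),
      ((∀ c ∈ Dlist, (g c.1 = g c.2.1 ↔ c.2.2 = true)) → g (C x) = g x) ∧
      ((¬ ∀ c ∈ Dlist, (g c.1 = g c.2.1 ↔ c.2.2 = true)) → g (C x) = g a) := by
    intro N _ hNE hNSI g x
    exact condVal_spec σd g (hσd N hNE hNSI) Dlist x a
  -- structural lemma: diagram-satisfying homs factor through the base coordinate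
  have hstruct : ∀ {N : Type u} [L.Structure N], ModelsEqs L E N → ∀ g : F →[L] N,
      (∀ c ∈ Dlist, (g c.1 = g c.2.1 ↔ c.2.2 = true)) →
      ∃ e : M →[L] N, Function.Injective ⇑e ∧ ∀ z : F, g z = e (h z) := by
    intro N _ hNE g hsat
    exact diagram_embed hnorel Nb hNb ι hfree h f hsec hNE g
      fun c hc => hsat c ((hmemDlist c).2 hc)
  have hCh : ∀ x, h (C x) = h x := fun x => (hCspec W.models W.si h x).1 hhsat
  set P : F → Prop := fun x => le a x ∧ le x b ∧ ¬ relAt τ σ' (h x) (h a) with hP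
  have hL1a : ∀ x, P x → le a (C x) := by
    intro x hx
    by_contra hn
    obtain ⟨W'⟩ := hwit a (C x) hn
    by_cases hS : ∀ c ∈ Dlist, (W'.g c.1 = W'.g c.2.1 ↔ c.2.2 = true)
    · have hCx := (hCspec W'.models W'.si W'.g x).1 hS
      apply W'.bad
      rw [hCx]
      exact hcoord hx.1 W'.g
    · have hCx := (hCspec W'.models W'.si W'.g x).2 hS
      apply W'.bad
      rw [hCx]
      exact hcoord (hrefl a) W'.g
  have hL1b : ∀ x, P x → le (C x) x := by
    intro x hx
    by_contra hn
    obtain ⟨W'⟩ := hwit (C x) x hn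
    by_cases hS : ∀ c ∈ Dlist, (W'.g c.1 = W'.g c.2.1 ↔ c.2.2 = true)
    · have hCx := (hCspec W'.models W'.si W'.g x).1 hS
      apply W'.bad
      rw [hCx]
      exact hcoord (hrefl x) W'.g
    · have hCx := (hCspec W'.models W'.si W'.g x).2 hS
      apply W'.bad
      rw [hCx]
      exact hcoord hx.1 W'.g
  have hL1c : ∀ x, P x → ¬ le (C x) a := by
    intro x hx hle'
    have hr := hcoord hle' h
    rw [hCh x] at hr
    exact hx.2.2 hr
  have hL2 : ∀ x, P x → ∀ y, le a y → ¬ le y a → le y (C x) → ¬ le (C x) y →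
      P y ∧ ¬ relAt τ σ' (h x) (h y) := by
    intro x hx y hay hnya hyCx hnCxy
    obtain ⟨W₁⟩ := hwit y a hnya
    have hS₁ : ∀ c ∈ Dlist, (W₁.g c.1 = W₁.g c.2.1 ↔ c.2.2 = true) := by
      by_contra hS
      have hCx := (hCspec W₁.models W₁.si W₁.g x).2 hS
      have h2 := hcoord hyCx W₁.g
      rw [hCx] at h2
      exact W₁.bad h2
    obtain ⟨e₁, he₁inj, he₁⟩ := hstruct W₁.models W₁.g hS₁
    have hyha : ¬ relAt τ σ' (h y) (h a) := by
      intro hr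
      apply W₁.bad
      rw [he₁ y, he₁ a]
      exact relAt_map e₁ hr
    obtain ⟨W₂⟩ := hwit (C x) y hnCxy
    have hS₂ : ∀ c ∈ Dlist, (W₂.g c.1 = W₂.g c.2.1 ↔ c.2.2 = true) := by
      by_contra hS
      have hCx := (hCspec W₂.models W₂.si W₂.g x).2 hS
      apply W₂.bad
      rw [hCx]
      exact hcoord hay W₂.g
    obtain ⟨e₂, he₂inj, he₂⟩ := hstruct W₂.models W₂.g hS₂
    have hxy : ¬ relAt τ σ' (h x) (h y) := by
      intro hr
      apply W₂.bad
      have hCx2 : W₂.g (C x) = W₂.g x := (hCspec W₂.models W₂.si W₂.g x).1 hS₂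
      rw [hCx2, he₂ x, he₂ y]
      exact relAt_map e₂ hr
    exact ⟨⟨hay, htrans (htrans hyCx (hL1b x hx)) hx.2.1, hyha⟩, hxy⟩
  by_contra hno
  push_neg at hno
  have key : ∀ x, P x → ∃ y, P y ∧ ¬ relAt τ σ' (h x) (h y) ∧ le y x := by
    intro x hx
    obtain ⟨y, ⟨hay, hnya⟩, hyCx, hnCxy⟩ :=
      hno (C x) ⟨hL1a x hx, hL1c x hx⟩ (htrans (hL1b x hx) hx.2.1)
    obtain ⟨hPy, hxy⟩ := hL2 x hx y hay hnya hyCx hnCxy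
    exact ⟨y, hPy, hxy, htrans hyCx (hL1b x hx)⟩
  have hPb : P b := ⟨hab, hrefl b, W.bad⟩
  let nxt : {z : F // P z} → {z : F // P z} :=
    fun z => ⟨(key z.1 z.2).choose, (key z.1 z.2).choose_spec.1⟩
  let seq : ℕ → {z : F // P z} := fun n => nxt^[n] ⟨b, hPb⟩
  have hseq_succ : ∀ n, seq (n + 1) = nxt (seq n) := fun n =>
    Function.iterate_succ_apply' nxt n _
  have hstep2 : ∀ n, ¬ relAt τ σ' (h (seq n).1) (h (seq (n + 1)).1) := by
    intro n
    rw [hseq_succ n]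
    exact (key (seq n).1 (seq n).2).choose_spec.2.1
  have hstep3 : ∀ n, le (seq (n + 1)).1 (seq n).1 := by
    intro n
    rw [hseq_succ n]
    exact (key (seq n).1 (seq n).2).choose_spec.2.2
  have hchain : ∀ n k, le (seq (n + k)).1 (seq n).1 := by
    intro n k
    induction k with
    | zero => exact hrefl _
    | succ k ih => exact htrans (hstep3 (n + k)) ih
  have hdist : ∀ i j, i < j → h (seq i).1 ≠ h (seq j).1 := by
    intro i j hij heq
    apply hstep2 i
    rw [heq]
    have hle : le (seq j).1 (seq (i + 1)).1 := by
      obtain ⟨k, rfl⟩ := Nat.exists_eq_add_of_le (Nat.succ_le_of_lt hij)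
      exact hchain (i + 1) k
    exact hcoord hle h
  obtain ⟨i, j, hne, heq⟩ := Finite.exists_ne_map_eq_of_infinite fun n : ℕ => h (seq n).1
  rcases lt_trichotomy i j with hlt | hEq | hgt
  · exact hdist i j hlt heq
  · exact hne hEq
  · exact hdist j i hgt heq.symm
end

section
/- Let V be a discriminator variety of finite similarity type that is generated by its finite members as a variety, and assume that V has a Boolean algebra reduct: the language of V contains symbols for the Boolean operations ∧, ∨, ¬, 0, 1 and every member of V is a Boolean algebra under these operations. Then every finitely generated V-free algebra is atomic as a Boolean algebra: every nonzero element has an atom below it. -/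
open FirstOrder FirstOrder.Language FirstOrder.Language.Structure

/-- The Boolean algebra operations of `M` are the interpretations of the
designated function symbols `fmeet`, `fjoin`, `fcompl`, `fbot`, `ftop`. -/
def BoolOpsMatch {L : Language} (fmeet fjoin : L.Functions 2)
    (fcompl : L.Functions 1) (fbot ftop : L.Functions 0)
    (M : Type*) [L.Structure M] [BooleanAlgebra M] : Prop :=
  (∀ a b : M, funMap fmeet ![a, b] = a ⊓ b) ∧
  (∀ a b : M, funMap fjoin ![a, b] = a ⊔ b) ∧
  (∀ a : M, funMap fcompl ![a] = aᶜ) ∧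
  funMap fbot ![] = (⊥ : M) ∧
  funMap ftop ![] = (⊤ : M)

namespace AtomAux

variable {L : Language}

section Terms
variable (fmeet fjoin : L.Functions 2) (fcompl : L.Functions 1) (fbot ftop : L.Functions 0)

def botT : L.Term ℕ := Term.func fbot ![]
def topT : L.Term ℕ := Term.func ftop ![]
def meetT (s t : L.Term ℕ) : L.Term ℕ := Term.func fmeet ![s, t]
def joinT (s t : L.Term ℕ) : L.Term ℕ := Term.func fjoin ![s, t]
def complT (s : L.Term ℕ) : L.Term ℕ := Term.func fcompl ![s]
def sdT (s t : L.Term ℕ) : L.Term ℕ :=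
  joinT fjoin (meetT fmeet s (complT fcompl t)) (meetT fmeet t (complT fcompl s))
def meetList (l : List (L.Term ℕ)) : L.Term ℕ := l.foldr (meetT fmeet) (topT ftop)
def cT (σ : L.Term (Fin 4)) (τ : L.Term ℕ) : L.Term ℕ :=
  σ.subst ![τ, botT fbot, botT fbot, topT ftop]
def factorT (σ : L.Term (Fin 4)) (τ₁ τ₂ : L.Term ℕ) : L.Term ℕ :=
  complT fcompl (cT fbot ftop σ (sdT fmeet fjoin fcompl τ₁ τ₂))

end Terms

section Lemmas
variable {fmeet fjoin : L.Functions 2} {fcompl : L.Functions 1} {fbot ftop : L.Functions 0}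
variable {M : Type*} [L.Structure M] [BooleanAlgebra M]

theorem realize_botT (h : BoolOpsMatch fmeet fjoin fcompl fbot ftop M) (v : ℕ → M) :
    (botT (L := L) fbot).realize v = ⊥ := by
  rw [botT, Term.realize_func, ← h.2.2.2.1]
  congr 1; funext i; exact i.elim0

theorem realize_topT (h : BoolOpsMatch fmeet fjoin fcompl fbot ftop M) (v : ℕ → M) :
    (topT (L := L) ftop).realize v = ⊤ := by
  rw [topT, Term.realize_func, ← h.2.2.2.2]
  congr 1; funext i; exact i.elim0

theorem realize_meetT (h : BoolOpsMatch fmeet fjoin fcompl fbot ftop M) (v : ℕ → M) (s t : L.Term ℕ) :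
    (meetT fmeet s t).realize v = s.realize v ⊓ t.realize v := by
  rw [meetT, Term.realize_func, ← h.1 (s.realize v) (t.realize v)]
  congr 1; funext i; fin_cases i <;> rfl

theorem realize_joinT (h : BoolOpsMatch fmeet fjoin fcompl fbot ftop M) (v : ℕ → M) (s t : L.Term ℕ) :
    (joinT fjoin s t).realize v = s.realize v ⊔ t.realize v := by
  rw [joinT, Term.realize_func, ← h.2.1 (s.realize v) (t.realize v)]
  congr 1; funext i; fin_cases i <;> rfl

theorem realize_complT (h : BoolOpsMatch fmeet fjoin fcompl fbot ftop M) (v : ℕ → M) (s : L.Term ℕ) :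
    (complT fcompl s).realize v = (s.realize v)ᶜ := by
  rw [complT, Term.realize_func, ← h.2.2.1 (s.realize v)]
  congr 1; funext i; fin_cases i <;> rfl

theorem realize_sdT (h : BoolOpsMatch fmeet fjoin fcompl fbot ftop M) (v : ℕ → M) (s t : L.Term ℕ) :
    (sdT fmeet fjoin fcompl s t).realize v = symmDiff (s.realize v) (t.realize v) := by
  rw [sdT, realize_joinT h, realize_meetT h, realize_meetT h,
    realize_complT h, realize_complT h, symmDiff_def, sdiff_eq, sdiff_eq]

theorem realize_cT (h : BoolOpsMatch fmeet fjoin fcompl fbot ftop M) (v : ℕ → M)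
    (σ : L.Term (Fin 4)) (τ : L.Term ℕ) :
    (cT fbot ftop σ τ).realize v = σ.realize ![τ.realize v, ⊥, ⊥, ⊤] := by
  rw [cT, Term.realize_subst]
  congr 1; funext i
  fin_cases i
  · rfl
  · exact realize_botT h v
  · exact realize_botT h v
  · exact realize_topT h v

theorem realize_meetList (h : BoolOpsMatch fmeet fjoin fcompl fbot ftop M) (v : ℕ → M)
    (l : List (L.Term ℕ)) :
    (meetList fmeet ftop l).realize v =
      l.foldr (fun τ x => τ.realize v ⊓ x) ⊤ := by
  induction l with
  | nil => exact realize_topT h v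
  | cons τ l ih =>
      rw [meetList, List.foldr_cons, ← meetList, realize_meetT h, ih, List.foldr_cons]

theorem realize_meetList_top (h : BoolOpsMatch fmeet fjoin fcompl fbot ftop M) (v : ℕ → M)
    (l : List (L.Term ℕ))
    (hl : ∀ τ ∈ l, τ.realize v = ⊤) : (meetList fmeet ftop l).realize v = ⊤ := by
  rw [realize_meetList h]
  induction l with
  | nil => rfl
  | cons τ l ih =>
      rw [List.foldr_cons, hl τ (List.mem_cons_self),
        ih fun τ' hτ' => hl τ' (List.mem_cons_of_mem _ hτ'), top_inf_eq]

theorem realize_meetList_cases (h : BoolOpsMatch fmeet fjoin fcompl fbot ftop M) (v : ℕ → M)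
    (l : List (L.Term ℕ))
    (hl : ∀ τ ∈ l, τ.realize v = ⊥ ∨ τ.realize v = ⊤) :
    (meetList fmeet ftop l).realize v = ⊥ ∨
      ((meetList fmeet ftop l).realize v = ⊤ ∧ ∀ τ ∈ l, τ.realize v = ⊤) := by
  rw [realize_meetList h]
  induction l with
  | nil => exact Or.inr ⟨rfl, by simp⟩
  | cons τ l ih =>
      rw [List.foldr_cons]
      rcases hl τ (List.mem_cons_self) with hτ | hτ
      · rw [hτ, bot_inf_eq]; exact Or.inl rfl
      · rcases ih (fun τ' hτ' => hl τ' (List.mem_cons_of_mem _ hτ')) with hres | ⟨hres, hall⟩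
        · rw [hres, inf_bot_eq]; exact Or.inl rfl
        · rw [hres, hτ, top_inf_eq]
          refine Or.inr ⟨rfl, fun τ' hτ' => ?_⟩
          rcases List.mem_cons.mp hτ' with rfl | hτ'
          · exact hτ
          · exact hall τ' hτ'

theorem realize_factorT (h : BoolOpsMatch fmeet fjoin fcompl fbot ftop M) {σ : L.Term (Fin 4)}
    (hσd : ∀ x y a b : M, (x = y → σ.realize ![x, y, a, b] = a) ∧
      (x ≠ y → σ.realize ![x, y, a, b] = b))
    (τ₁ τ₂ : L.Term ℕ) (v : ℕ → M) :
    ((factorT fmeet fjoin fcompl fbot ftop σ τ₁ τ₂).realize v = ⊤ ∧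
        τ₁.realize v = τ₂.realize v) ∨
      ((factorT fmeet fjoin fcompl fbot ftop σ τ₁ τ₂).realize v = ⊥ ∧
        τ₁.realize v ≠ τ₂.realize v) := by
  rw [factorT, realize_complT h, realize_cT h, realize_sdT h]
  by_cases hd : τ₁.realize v = τ₂.realize v
  · refine Or.inl ⟨?_, hd⟩
    rw [(hσd _ ⊥ ⊥ ⊤).1 (symmDiff_eq_bot.mpr hd), compl_bot]
  · refine Or.inr ⟨?_, hd⟩
    rw [(hσd _ ⊥ ⊥ ⊤).2 fun hc => hd (symmDiff_eq_bot.mp hc), compl_top]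

end Lemmas

theorem realize_comm {M N₂ : Type*} [L.Structure M] [L.Structure N₂] (π : M → N₂)
    (hπ : ∀ (n : ℕ) (f : L.Functions n) (a : Fin n → M), π (funMap f a) = funMap f (π ∘ a))
    {β : Type*} (t : L.Term β) (v : β → M) :
    t.realize (π ∘ v) = π (t.realize v) := by
  induction t with
  | var => rfl
  | func f ts ih =>
      rw [Term.realize_func, Term.realize_func, hπ]
      congr 1; funext i; exact ih i

theorem mem_closure_term {M : Type*} [L.Structure M] {X' : Type*} (g : X' → M) (y : M)
    (hy : y ∈ Substructure.closure L (Set.range g)) : ∃ t : L.Term X', t.realize g = y := by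
  classical
  let R : L.Substructure M :=
    { carrier := {z | ∃ t : L.Term X', t.realize g = z}
      fun_mem := by
        intro n f a ha
        choose ts hts using ha
        exact ⟨Term.func f ts, by rw [Term.realize_func]; exact congrArg _ (funext hts)⟩ }
  have : Set.range g ⊆ R := by
    rintro _ ⟨x, rfl⟩
    exact ⟨Term.var x, rfl⟩
  exact Substructure.closure_le.mpr this hy

theorem exists_si_quotient (hnorel : ∀ n, IsEmpty (L.Relations n))
    (E : Set (L.Term ℕ × L.Term ℕ)) (M : Type u) [L.Structure M] [Finite M]
    (hE : ModelsEqs L E M) (x₀ y₀ : M) (hxy : x₀ ≠ y₀) :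
    ∃ (N : Type u) (SN : L.Structure N) (π : M → N),
      (∀ (n : ℕ) (f : L.Functions n) (a : Fin n → M),
        π (funMap f a) = @funMap L N SN n f (π ∘ a)) ∧
      @ModelsEqs L E N SN ∧ @SubdirectlyIrreducible L N SN ∧ Finite N ∧ π x₀ ≠ π y₀ := by
  classical
  let P : Set (M → M → Prop) := {d | IsCongruence L M d ∧ ¬ d x₀ y₀}
  have hPne : P.Nonempty :=
    ⟨Eq, ⟨eq_equivalence, fun n f a b h => congrArg _ (funext h)⟩, hxy⟩
  obtain ⟨c, hcP, hcmax⟩ := Set.Finite.exists_maximalFor id P (Set.toFinite P) hPne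
  let s : Setoid M := ⟨c, hcP.1.1⟩
  let N := Quotient s
  let SN : L.Structure N :=
    { funMap := fun {n} f a => Quotient.mk s (funMap f fun i => (a i).out)
      RelMap := fun {n} r _ => (hnorel n).elim r }
  letI := SN
  let π : M → N := Quotient.mk s
  have hπ : ∀ (n : ℕ) (f : L.Functions n) (a : Fin n → M),
      π (funMap f a) = funMap f (π ∘ a) := by
    intro n f a
    refine (Quotient.sound ?_).symm
    exact hcP.1.2 n f _ _ fun i => Quotient.mk_out (a i)
  have hπexact : ∀ x y : M, π x = π y → c x y := fun x y h => Quotient.exact h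
  have hπne : π x₀ ≠ π y₀ := fun h => hcP.2 (hπexact _ _ h)
  refine ⟨N, SN, π, hπ, ?_, ?_, Quotient.finite s, hπne⟩
  · intro e he v
    have hv : v = π ∘ fun n => (v n).out := by
      funext n; exact (Quotient.out_eq (v n)).symm
    rw [hv, realize_comm π hπ, realize_comm π hπ, hE e he]
  · have key : ∀ d : N → N → Prop, IsCongruence L N d → d ≠ Eq → d (π x₀) (π y₀) := by
      intro d hd hdne
      let dbar : M → M → Prop := fun x y => d (π x) (π y)
      have hdbar : IsCongruence L M dbar :=
        ⟨⟨fun x => hd.1.refl _, fun h => hd.1.symm h, fun h h' => hd.1.trans h h'⟩,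
          fun n f a b h => by
            show d (π (funMap f a)) (π (funMap f b))
            rw [hπ, hπ]
            exact hd.2 n f _ _ h⟩
      have hle : c ≤ dbar := by
        intro x y hxy'
        have hpxy : π x = π y := Quotient.sound hxy'
        show d (π x) (π y)
        rw [hpxy]
        exact hd.1.refl _
      have hne' : dbar ≠ c := by
        have : ∃ q₁ q₂ : N, d q₁ q₂ ∧ q₁ ≠ q₂ := by
          by_contra hcon
          push_neg at hcon
          apply hdne
          funext q₁ q₂
          exact propext ⟨fun h => hcon q₁ q₂ h, fun h => h ▸ hd.1.refl _⟩
        obtain ⟨q₁, q₂, hdq, hqne⟩ := this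
        obtain ⟨m₁, rfl⟩ := Quotient.exists_rep q₁
        obtain ⟨m₂, rfl⟩ := Quotient.exists_rep q₂
        intro hcon
        have : c m₁ m₂ := hcon ▸ hdq
        exact hqne (Quotient.sound this)
      by_contra hcon
      have : dbar ∈ P := ⟨hdbar, hcon⟩
      exact hne' (le_antisymm hle (hcmax this hle)).symm
    refine ⟨fun x y => ∀ d : N → N → Prop, IsCongruence L N d → d ≠ Eq → d x y,
      ⟨⟨fun x d hd _ => hd.1.refl x, fun h d hd hdne => hd.1.symm (h d hd hdne),
        fun h h' d hd hdne => hd.1.trans (h d hd hdne) (h' d hd hdne)⟩,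
        fun n f a b h d hd hdne => hd.2 n f a b fun i => h i d hd hdne⟩, ?_,
      fun d hd hdne x y hxy' => hxy' d hd hdne⟩
    intro hcon
    have : π x₀ = π y₀ := hcon ▸ (fun d hd hdne => key d hd hdne)
    exact hπne this

end AtomAux

open AtomAux

/-- A finitely generated free algebra of a discriminator variety of finite
similarity type with a Boolean algebra reduct which is generated by its
finite members is atomic as a Boolean algebra. -/
theorem free_algebra_of_discriminator_variety_atomic
    {L : Language} (E : Set (L.Term ℕ × L.Term ℕ))
    -- finite similarity type: no relation symbols, finitely many operation
    -- symbols, each of finite arity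
    (hnorel : ∀ n, IsEmpty (L.Relations n))
    (hfinfun : ∀ n, Finite (L.Functions n))
    (hfinarity : ∃ N : ℕ, ∀ n, N ≤ n → IsEmpty (L.Functions n))
    -- discriminator variety: there is a switching term for the subdirectly
    -- irreducible members of the variety
    (hdisc : ∃ σ : L.Term (Fin 4),
      ∀ (M : Type u) [L.Structure M], ModelsEqs L E M →
        SubdirectlyIrreducible L M → ∀ x y a b : M,
          (x = y → σ.realize ![x, y, a, b] = a) ∧
          (x ≠ y → σ.realize ![x, y, a, b] = b))
    -- the variety is generated by its finite members: every equation valid in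
    -- all finite members is valid in all members
    (hgenfin : ∀ t s : L.Term ℕ,
      (∀ (M : Type u) [L.Structure M], Finite M → ModelsEqs L E M →
        ∀ v : ℕ → M, t.realize v = s.realize v) →
      (∀ (M : Type u) [L.Structure M], ModelsEqs L E M →
        ∀ v : ℕ → M, t.realize v = s.realize v))
    -- the variety has a Boolean algebra reduct, via the designated symbols
    (fmeet fjoin : L.Functions 2) (fcompl : L.Functions 1)
    (fbot ftop : L.Functions 0)
    (hBA : ∀ (M : Type u) [L.Structure M], ModelsEqs L E M →
      ∃ _inst : BooleanAlgebra M, BoolOpsMatch fmeet fjoin fcompl fbot ftop M)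
    -- `F` is the `V`-free algebra freely generated by the finite set `X`
    {F : Type u} [L.Structure F] (hF : ModelsEqs L E F)
    {X : Type*} [Finite X] (ι : X → F)
    (hfree : ∀ (A : Type u) [L.Structure A], ModelsEqs L E A →
      ∀ f : X → A, ∃! g : F →[L] A, ∀ x : X, g (ι x) = f x)
    -- the Boolean algebra structure of `F` given by the reduct
    [BooleanAlgebra F] (hFBA : BoolOpsMatch fmeet fjoin fcompl fbot ftop F) :
    -- conclusion: `F` is atomic as a Boolean algebra
    ∀ b : F, b ≠ ⊥ → ∃ a : F, IsAtom a ∧ a ≤ b := by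
  classical
  obtain ⟨σ, hσ⟩ := hdisc
  obtain ⟨NB, hNB⟩ := hfinarity
  obtain ⟨k, hk⟩ := Countable.exists_injective_nat X
  -- the standard assignment of the free generators
  let v₀ : ℕ → F := fun n => if h : ∃ x, k x = n then ι h.choose else ⊥
  have hv₀ : ∀ x : X, v₀ (k x) = ι x := by
    intro x
    have hx : ∃ x', k x' = k x := ⟨x, rfl⟩
    simp only [v₀]
    rw [dif_pos hx]
    exact congrArg ι (hk hx.choose_spec)
  have hv₀k : v₀ ∘ k = ι := funext hv₀
  -- every element of F is the value of a term at the generators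
  have hFrep : ∀ y : F, ∃ t' : L.Term X, t'.realize ι = y := by
    intro y
    refine mem_closure_term ι y ?_
    set S' := Substructure.closure L (Set.range ι) with hS'
    have hSE : ModelsEqs L E S' := by
      intro e he v
      have h1 := HomClass.realize_term (S'.subtype) (t := e.1) (v := v)
      have h2 := HomClass.realize_term (S'.subtype) (t := e.2) (v := v)
      have h3 := hF e he (⇑S'.subtype ∘ v)
      rw [h1, h2] at h3
      exact S'.subtype.injective h3
    obtain ⟨g, hg, _⟩ := hfree S' hSE
      (fun x => ⟨ι x, Substructure.subset_closure (Set.mem_range_self x)⟩)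
    obtain ⟨gF, hgF, huniqF⟩ := hfree F hF ι
    have e1 : S'.subtype.toHom.comp g = gF := huniqF _ (fun x => by
      show ((g (ι x) : S') : F) = ι x
      rw [hg x])
    have e2 : Hom.id L F = gF := huniqF _ (fun x => rfl)
    have h1 : S'.subtype.toHom.comp g = Hom.id L F := e1.trans e2.symm
    have h2 : S'.subtype (g y) = y := congrFun (congrArg (fun h : F →[L] F => (h : F → F)) h1) y
    rw [← h2]
    exact (g y).2
  intro b hb
  obtain ⟨t₀, hbt⟩ := hFrep b
  set t : L.Term ℕ := t₀.relabel k with ht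
  have hbF : t.realize v₀ = b := by rw [ht, Term.realize_relabel, hv₀k, hbt]
  have hbneq : t.realize v₀ ≠ (botT (L := L) fbot).realize v₀ := by
    rw [hbF, realize_botT hFBA]; exact hb
  -- find a finite member and an assignment where t is not ⊥
  have hexM : ∃ (M : Type u) (SM : L.Structure M), Finite M ∧ @ModelsEqs L E M SM ∧
      ∃ v : ℕ → M, @Term.realize L M SM ℕ v t ≠ @Term.realize L M SM ℕ v (botT fbot) := by
    by_contra hcon
    push_neg at hcon
    exact hbneq (hgenfin t (botT fbot) (fun M SM hf hE v => hcon M SM hf hE v) F hF v₀)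
  obtain ⟨M, SM, hMfin, hME, v, hvne⟩ := hexM
  letI := SM; letI := hMfin
  obtain ⟨instM, hMops⟩ := hBA M hME
  letI := instM
  let w : ℕ → M := fun n => if ∃ x, k x = n then v n else ⊥
  have hwk : w ∘ k = v ∘ k := funext fun x => if_pos ⟨x, rfl⟩
  have hwbot : ∀ n, ¬(∃ x, k x = n) → w n = ⊥ := fun n h => if_neg h
  have hwne : t.realize w ≠ ⊥ := by
    have hh : t.realize w = t.realize v := by
      rw [ht, Term.realize_relabel, Term.realize_relabel, hwk]
    rw [hh]
    rw [realize_botT hMops] at hvne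
    exact hvne
  -- pass to a subdirectly irreducible finite quotient
  obtain ⟨N, SN, π, hπ, hNE, hNSI, hNfin, hπne⟩ :=
    exists_si_quotient hnorel E M hME (t.realize w) ⊥ hwne
  letI := SN; letI := hNfin
  obtain ⟨instN, hNops⟩ := hBA N hNE
  letI := instN
  set wN : ℕ → N := π ∘ w with hwN
  have hπbot : π (⊥ : M) = ⊥ := by
    have h0 := hπ 0 fbot ![]
    rw [hMops.2.2.2.1] at h0
    rw [h0, show (π ∘ (![] : Fin 0 → M)) = (![] : Fin 0 → N) from funext fun i => i.elim0,
      hNops.2.2.2.1]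
  have htwN : t.realize wN ≠ ⊥ := by
    rw [hwN, realize_comm π hπ t w]
    intro hcon
    exact hπne (by rw [hcon, hπbot])
  have hwNbot : ∀ n, ¬(∃ x, k x = n) → wN n = ⊥ := by
    intro n h
    rw [hwN]
    show π (w n) = ⊥
    rw [hwbot n h, hπbot]
  -- the finitely many term-values in N
  set S : Set N := {p | ∃ u : L.Term ℕ, u.realize wN = p} with hS
  have hSclosed : ∀ (n : ℕ) (f : L.Functions n) (aa : Fin n → N),
      (∀ i, aa i ∈ S) → funMap f aa ∈ S := by
    intro n f aa haa
    choose ts hts using haa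
    exact ⟨Term.func f ts, by rw [Term.realize_func]; exact congrArg _ (funext hts)⟩
  let U : N → L.Term ℕ := fun p => if h : p ∈ S then h.choose else botT fbot
  have hU : ∀ p, ∀ hp : p ∈ S, (U p).realize wN = p := by
    intro p hp
    simp only [U]
    rw [dif_pos hp]
    exact hp.choose_spec
  -- an "atom" of the term-values below t
  set A : Set N := {y | y ∈ S ∧ y ≠ ⊥ ∧ y ≤ t.realize wN} with hA
  have hAne : A.Nonempty := ⟨t.realize wN, ⟨t, rfl⟩, htwN, le_refl _⟩
  obtain ⟨α, hαA, hαmin⟩ := Set.Finite.exists_minimalFor id A (Set.toFinite A) hAne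
  have hmeetS : ∀ p q : N, p ∈ S → q ∈ S → p ⊓ q ∈ S := by
    intro p q hp hq
    have h2 := hSclosed 2 fmeet ![p, q] ?_
    · rw [hNops.1] at h2; exact h2
    · intro i; fin_cases i
      · exact hp
      · exact hq
  have hatom : ∀ p ∈ S, α ⊓ p = α ∨ α ⊓ p = ⊥ := by
    intro p hp
    by_cases hbp : α ⊓ p = ⊥
    · exact Or.inr hbp
    · refine Or.inl ?_
      have hmem : α ⊓ p ∈ A := ⟨hmeetS α p hαA.1 hp, hbp, le_trans inf_le_left hαA.2.2⟩
      exact le_antisymm inf_le_left (hαmin hmem inf_le_left)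
  -- the diagram term D
  letI : Fintype X := Fintype.ofFinite X
  letI : ∀ m : ℕ, Fintype (L.Functions m) := fun m => Fintype.ofFinite _
  letI : Fintype {p : N // p ∈ S} := Fintype.ofFinite _
  let I2 : Type _ := Σ n : Fin NB, (L.Functions (n : ℕ) × (Fin (n : ℕ) → {p : N // p ∈ S}))
  let fA : X → L.Term ℕ := fun x =>
    factorT fmeet fjoin fcompl fbot ftop σ (U (wN (k x))) (Term.var (k x))
  let fB : I2 → L.Term ℕ := fun q =>
    factorT fmeet fjoin fcompl fbot ftop σ (U (funMap q.2.1 fun i => (q.2.2 i).val))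
      (Term.func q.2.1 fun i => U (q.2.2 i).val)
  let Ds : List (L.Term ℕ) := (Finset.univ.toList.map fA) ++ (Finset.univ.toList.map fB)
  have hDsA : ∀ x : X, fA x ∈ Ds := fun x =>
    List.mem_append_left _ (List.mem_map_of_mem (f := fA) (Finset.mem_toList.mpr (Finset.mem_univ x)))
  have hDsB : ∀ q : I2, fB q ∈ Ds := fun q =>
    List.mem_append_right _ (List.mem_map_of_mem (f := fB) (Finset.mem_toList.mpr (Finset.mem_univ q)))
  have hDsmem : ∀ τ ∈ Ds, (∃ x : X, τ = fA x) ∨ ∃ q : I2, τ = fB q := by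
    intro τ hτ
    rcases List.mem_append.mp hτ with h | h
    · obtain ⟨x, _, rfl⟩ := List.mem_map.mp h
      exact Or.inl ⟨x, rfl⟩
    · obtain ⟨q, _, rfl⟩ := List.mem_map.mp h
      exact Or.inr ⟨q, rfl⟩
  set D : L.Term ℕ := meetList fmeet ftop Ds with hD
  set τa : L.Term ℕ := meetT fmeet (U α) D with hτa
  -- the realization of τa in N at wN is α
  have hσN := hσ N hNE hNSI
  have hDtopN : ∀ τ ∈ Ds, τ.realize wN = ⊤ := by
    intro τ hτ
    rcases hDsmem τ hτ with ⟨x, rfl⟩ | ⟨q, rfl⟩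
    · rcases realize_factorT hNops hσN (U (wN (k x))) (Term.var (k x)) wN with h | h
      · exact h.1
      · exact absurd (hU _ ⟨Term.var (k x), rfl⟩) h.2
    · rcases realize_factorT hNops hσN (U (funMap q.2.1 fun i => (q.2.2 i).val))
        (Term.func q.2.1 fun i => U (q.2.2 i).val) wN with h | h
      · exact h.1
      · refine absurd ?_ h.2
        rw [hU _ (hSclosed _ q.2.1 _ fun i => (q.2.2 i).2), Term.realize_func]
        exact congrArg _ (funext fun i => (hU _ (q.2.2 i).2).symm)
  have haN : τa.realize wN = α := by
    rw [hτa, realize_meetT hNops, hU α hαA.1, hD, realize_meetList_top hNops wN Ds hDtopN,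
      inf_top_eq]
  -- the core semantic lemma in subdirectly irreducible members
  have core : ∀ (N' : Type u) [SN' : L.Structure N'],
      ModelsEqs L E N' → SubdirectlyIrreducible L N' → ∀ (v' : ℕ → N') (s₀ : L.Term X),
      (α ⊓ ((s₀.relabel k).realize wN) = α →
        (meetT fmeet τa (s₀.relabel k)).realize v' = τa.realize v') ∧
      (α ⊓ ((s₀.relabel k).realize wN) = ⊥ →
        (meetT fmeet τa (s₀.relabel k)).realize v' = (botT (L := L) fbot).realize v') := by
    intro N' SN' hE' hSI' v' s₀
    obtain ⟨instN', hN'ops⟩ := hBA N' hE'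
    by_cases hdeg : (⊥ : N') = ⊤
    · have hsub : ∀ z₁ z₂ : N', z₁ = z₂ := by
        have hz : ∀ z : N', z = ⊥ := fun z => by
          calc z = z ⊓ ⊤ := (inf_top_eq z).symm
          _ = z ⊓ ⊥ := by rw [hdeg]
          _ = ⊥ := inf_bot_eq z
        intro z₁ z₂
        rw [hz z₁, hz z₂]
      exact ⟨fun _ => hsub _ _, fun _ => hsub _ _⟩
    have hσ' := hσ N' hE' hSI'
    have hfac := fun τ₁ τ₂ => realize_factorT hN'ops hσ' τ₁ τ₂ v'
    have hDall : ∀ τ ∈ Ds, τ.realize v' = ⊥ ∨ τ.realize v' = ⊤ := by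
      intro τ hτ
      rcases hDsmem τ hτ with ⟨x, rfl⟩ | ⟨q, rfl⟩
      · rcases hfac (U (wN (k x))) (Term.var (k x)) with h | h
        · exact Or.inr h.1
        · exact Or.inl h.1
      · rcases hfac (U (funMap q.2.1 fun i => (q.2.2 i).val))
          (Term.func q.2.1 fun i => U (q.2.2 i).val) with h | h
        · exact Or.inr h.1
        · exact Or.inl h.1
    rcases realize_meetList_cases hN'ops v' Ds hDall with hDv | ⟨hDv, hall⟩
    · have hta : τa.realize v' = ⊥ := by
        rw [hτa, realize_meetT hN'ops, hD] at *
        rw [hDv, inf_bot_eq]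
      constructor
      · intro _
        rw [realize_meetT hN'ops, hta, bot_inf_eq]
      · intro _
        rw [realize_meetT hN'ops, hta, bot_inf_eq, realize_botT hN'ops]
    · have hfeq : ∀ τ₁ τ₂ : L.Term ℕ,
          factorT fmeet fjoin fcompl fbot ftop σ τ₁ τ₂ ∈ Ds →
          τ₁.realize v' = τ₂.realize v' := by
        intro τ₁ τ₂ hmem
        rcases hfac τ₁ τ₂ with h | h
        · exact h.2
        · exact absurd (h.1.symm.trans (hall _ hmem)) hdeg
      have hfB' : ∀ (n : ℕ) (f : L.Functions n) (pp : Fin n → N) (hp : ∀ i, pp i ∈ S),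
          (U (funMap f pp)).realize v' = funMap f fun i => (U (pp i)).realize v' := by
        intro n f pp hp
        by_cases hn : n < NB
        · have h2 := hfeq _ _ (hDsB ⟨⟨n, hn⟩, f, fun i => ⟨pp i, hp i⟩⟩)
          rw [Term.realize_func] at h2
          exact h2
        · exact ((hNB n (le_of_not_gt hn)).elim f)
      have hvar : ∀ x : X, (U (wN (k x))).realize v' = v' (k x) := fun x => hfeq _ _ (hDsA x)
      have hterm : ∀ s₁ : L.Term X,
          (s₁.relabel k).realize v' = (U ((s₁.relabel k).realize wN)).realize v' := by
        intro s₁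
        induction s₁ with
        | var x => exact (hvar x).symm
        | func f ts ih =>
            have hrel : (Term.func f ts).relabel k = Term.func f fun i => (ts i).relabel k := rfl
            rw [hrel, Term.realize_func,
              show (Term.func f fun i => (ts i).relabel k).realize wN
                = funMap f fun i => ((ts i).relabel k).realize wN from Term.realize_func wN f _,
              hfB' _ f (fun i => ((ts i).relabel k).realize wN)
                (fun i => ⟨(ts i).relabel k, rfl⟩)]
            congr 1; funext i; exact ih i
      have hta : τa.realize v' = (U α).realize v' := by
        rw [hτa, realize_meetT hN'ops, hD] at *
        rw [hDv, inf_top_eq]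
      have hmeet' : ∀ p, p ∈ S → (U (α ⊓ p)).realize v' = (U α).realize v' ⊓ (U p).realize v' := by
        intro p hp
        have h2 := hfB' 2 fmeet ![α, p] ?_
        · rw [← hNops.1 α p, h2,
            show (fun i => (U (![α, p] i)).realize v') = ![(U α).realize v', (U p).realize v']
              from funext fun i => by fin_cases i <;> rfl,
            hN'ops.1]
        · intro i; fin_cases i
          · exact hαA.1
          · exact hp
      have hbot' : (U (⊥ : N)).realize v' = ⊥ := by
        have h0 := hfB' 0 fbot ![] (fun i => i.elim0)
        rw [show (⊥ : N) = funMap fbot ![] from hNops.2.2.2.1.symm, h0,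
          show (fun i : Fin 0 => (U ((![] : Fin 0 → N) i)).realize v') = (![] : Fin 0 → N')
            from funext fun i => i.elim0,
          hN'ops.2.2.2.1]
      have hpS : (s₀.relabel k).realize wN ∈ S := ⟨s₀.relabel k, rfl⟩
      constructor
      · intro hcase
        rw [realize_meetT hN'ops, hta, hterm s₀, ← hmeet' _ hpS, hcase]
      · intro hcase
        rw [realize_meetT hN'ops, hta, hterm s₀, ← hmeet' _ hpS, hcase, hbot',
          realize_botT hN'ops]
  -- the transfer principle
  have transfer : ∀ τ₁ τ₂ : L.Term ℕ,
      (∀ (N' : Type u) [SN' : L.Structure N'], ModelsEqs L E N' →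
        SubdirectlyIrreducible L N' → ∀ v' : ℕ → N', τ₁.realize v' = τ₂.realize v') →
      τ₁.realize v₀ = τ₂.realize v₀ := by
    intro τ₁ τ₂ hvalid
    refine hgenfin τ₁ τ₂ ?_ F hF v₀
    intro M' SM' hfin' hE' v'
    by_contra hne
    letI := hfin'
    obtain ⟨Q, SQ, π', hπ', hQE, hQSI, hQfin, hπne'⟩ :=
      exists_si_quotient hnorel E M' hE' _ _ hne
    letI := SQ
    exact hπne' (by rw [← realize_comm π' hπ' τ₁ v', ← realize_comm π' hπ' τ₂ v',
      hvalid Q hQE hQSI (π' ∘ v')])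
  -- a := τa.realize v₀ is nonzero
  obtain ⟨g, hg, _⟩ := hfree N hNE (fun x => wN (k x))
  have hgcomm : ∀ (n : ℕ) (f : L.Functions n) (aa : Fin n → F),
      g (funMap f aa) = funMap f (⇑g ∘ aa) := fun n f aa => g.map_fun f aa
  have hgbot : g (⊥ : F) = ⊥ := by
    rw [show (⊥ : F) = funMap fbot ![] from hFBA.2.2.2.1.symm, hgcomm,
      show (⇑g ∘ (![] : Fin 0 → F)) = (![] : Fin 0 → N) from funext fun i => i.elim0,
      hNops.2.2.2.1]
  have hgv₀ : ∀ n, g (v₀ n) = wN n := by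
    intro n
    by_cases h : ∃ x, k x = n
    · simp only [v₀]
      rw [dif_pos h, hg h.choose, h.choose_spec]
    · simp only [v₀]
      rw [dif_neg h, hgbot, hwNbot n h]
  have hga : g (τa.realize v₀) = α := by
    rw [← realize_comm (⇑g) hgcomm τa v₀, show (⇑g ∘ v₀) = wN from funext hgv₀, haN]
  have haneq : τa.realize v₀ ≠ ⊥ := by
    intro hcon
    apply hαA.2.1
    rw [← hga, hcon, hgbot]
  -- a ≤ b
  have hab : τa.realize v₀ ⊓ b = τa.realize v₀ := by
    have h1 := transfer (meetT fmeet τa t) τa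
      (fun N' SN' hE' hSI' v' => (core N' hE' hSI' v' t₀).1 (inf_eq_left.mpr hαA.2.2))
    rw [realize_meetT hFBA, hbF] at h1
    exact h1
  refine ⟨τa.realize v₀, ⟨haneq, ?_⟩, inf_eq_left.mp hab⟩
  -- atomicity
  intro z hz
  obtain ⟨s₀, hs⟩ := hFrep z
  have hzF : (s₀.relabel k).realize v₀ = z := by rw [Term.realize_relabel, hv₀k, hs]
  have hpS : (s₀.relabel k).realize wN ∈ S := ⟨s₀.relabel k, rfl⟩
  rcases hatom _ hpS with hc | hc
  · exfalso
    have h1 := transfer (meetT fmeet τa (s₀.relabel k)) τa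
      (fun N' SN' hE' hSI' v' => (core N' hE' hSI' v' s₀).1 hc)
    rw [realize_meetT hFBA, hzF] at h1
    exact hz.ne (le_antisymm hz.le (inf_eq_left.mp h1))
  · have h1 := transfer (meetT fmeet τa (s₀.relabel k)) (botT fbot)
      (fun N' SN' hE' hSI' v' => (core N' hE' hSI' v' s₀).2 hc)
    rw [realize_meetT hFBA, hzF, realize_botT hFBA] at h1
    exact (inf_eq_right.mpr hz.le).symm.trans h1
end

section
/- Let X be an infinite type, let B be a Boolean algebra, and let ι : X → B be a map such that B is the free Boolean algebra on X via ι: for every Boolean algebra C and every map f : X → C there exists a unique Boolean algebra homomorphism g : B → C (a map preserving ∧, ∨, ¬, 0, 1) with g ∘ ι = f. Then B is atomless: no element of B is an atom, i.e., for every b ∈ B with b ≠ 0 there exists x ∈ B with 0 < x < b. -/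
/-- A map between Boolean algebras is a Boolean algebra homomorphism if it
preserves `⊓`, `⊔`, complement, `⊥` and `⊤`. -/
def IsBooleanHom {B C : Type*} [BooleanAlgebra B] [BooleanAlgebra C] (g : B → C) : Prop :=
  (∀ a b : B, g (a ⊓ b) = g a ⊓ g b) ∧
  (∀ a b : B, g (a ⊔ b) = g a ⊔ g b) ∧
  (∀ a : B, g aᶜ = (g a)ᶜ) ∧
  g ⊥ = ⊥ ∧ g ⊤ = ⊤

section Aux

instance ULift.instHImp {α : Type*} [HImp α] : HImp (ULift.{v} α) :=
  ⟨fun a b => ⟨a.down ⇨ b.down⟩⟩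

instance ULift.instBooleanAlgebra {α : Type*} [BooleanAlgebra α] :
    BooleanAlgebra (ULift.{v} α) :=
  Function.Injective.booleanAlgebra ULift.down ULift.down_injective Iff.rfl Iff.rfl
    (fun _ _ => rfl) (fun _ _ => rfl) rfl rfl (fun _ => rfl) (fun _ _ => rfl) (fun _ _ => rfl)

/-- The predicate: the sequence part eventually equals the limit part. -/
def EvConv (p : Option ℕ → ULift.{v} Bool) : Prop :=
  ∀ᶠ n in Filter.atTop, p (some n) = p none

/-- The algebra of convergent `Bool`-sequences with designated limit. -/
def ConvSeq : Type v := {p : Option ℕ → ULift.{v} Bool // EvConv p}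

namespace ConvSeq

noncomputable instance : Max (ConvSeq.{v}) :=
  ⟨fun a b => ⟨a.1 ⊔ b.1, (a.2.and b.2).mono fun n h => by
    simp only [Pi.sup_apply, h.1, h.2]⟩⟩

noncomputable instance : Min (ConvSeq.{v}) :=
  ⟨fun a b => ⟨a.1 ⊓ b.1, (a.2.and b.2).mono fun n h => by
    simp only [Pi.inf_apply, h.1, h.2]⟩⟩

noncomputable instance : Compl (ConvSeq.{v}) :=
  ⟨fun a => ⟨a.1ᶜ, a.2.mono fun n h => by simp only [Pi.compl_apply, h]⟩⟩

noncomputable instance : SDiff (ConvSeq.{v}) :=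
  ⟨fun a b => ⟨a.1 \ b.1, (a.2.and b.2).mono fun n h => by
    simp only [Pi.sdiff_apply, h.1, h.2]⟩⟩

noncomputable instance : HImp (ConvSeq.{v}) :=
  ⟨fun a b => ⟨a.1 ⇨ b.1, (a.2.and b.2).mono fun n h => by
    simp only [Pi.himp_apply, h.1, h.2]⟩⟩

noncomputable instance : Top (ConvSeq.{v}) := ⟨⟨⊤, Filter.Eventually.of_forall fun _ => rfl⟩⟩

noncomputable instance : Bot (ConvSeq.{v}) := ⟨⟨⊥, Filter.Eventually.of_forall fun _ => rfl⟩⟩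

instance : LE (ConvSeq.{v}) := ⟨fun a b => a.1 ≤ b.1⟩

instance : LT (ConvSeq.{v}) := ⟨fun a b => a.1 < b.1⟩

noncomputable instance : BooleanAlgebra (ConvSeq.{v}) :=
  Function.Injective.booleanAlgebra Subtype.val Subtype.val_injective Iff.rfl Iff.rfl
    (fun _ _ => rfl) (fun _ _ => rfl) rfl rfl (fun _ => rfl) (fun _ _ => rfl) (fun _ _ => rfl)

/-- Evaluation at a coordinate is a Boolean homomorphism. -/
theorem isBooleanHom_eval (o : Option ℕ) :
    IsBooleanHom (fun p : ConvSeq.{v} => p.1 o) :=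
  ⟨fun _ _ => rfl, fun _ _ => rfl, fun _ => rfl, rfl, rfl⟩

end ConvSeq

theorem IsBooleanHom.comp {B C D : Type*} [BooleanAlgebra B] [BooleanAlgebra C]
    [BooleanAlgebra D] {g : C → D} {h : B → C} (hg : IsBooleanHom g) (hh : IsBooleanHom h) :
    IsBooleanHom (g ∘ h) := by
  obtain ⟨g1, g2, g3, g4, g5⟩ := hg
  obtain ⟨h1, h2, h3, h4, h5⟩ := hh
  exact ⟨fun a b => by simp [h1, g1], fun a b => by simp [h2, g2],
    fun a => by simp [h3, g3], by simp [h4, g4], by simp [h5, g5]⟩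

theorem IsBooleanHom.monotone {B C : Type*} [BooleanAlgebra B] [BooleanAlgebra C]
    {g : B → C} (hg : IsBooleanHom g) : Monotone g := by
  intro a b hab
  have : g (a ⊓ b) = g a ⊓ g b := hg.1 a b
  rw [inf_eq_left.2 hab] at this
  exact inf_eq_left.1 this.symm

theorem ulift_bool_bot_ne_top : (⊥ : ULift.{v} Bool) ≠ ⊤ := by
  intro h
  simpa using congrArg ULift.down h

theorem ulift_bool_ne_bot_eq_top {z : ULift.{v} Bool} (hz : z ≠ ⊥) : z = ⊤ := by
  rcases Bool.dichotomy z.down with h | h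
  · exact absurd (ULift.ext _ _ (by simp [h])) hz
  · exact ULift.ext _ _ (by simp [h])

end Aux

open Classical in
/-- The free Boolean algebra on an infinite set of generators is atomless. -/
theorem free_booleanAlgebra_on_infinite_atomless {X : Type*} [Infinite X]
    {B : Type u} [BooleanAlgebra B] (ι : X → B)
    (hfree : ∀ (C : Type v) [BooleanAlgebra C] (f : X → C),
      ∃! g : B → C, IsBooleanHom g ∧ g ∘ ι = f) :
    ∀ b : B, b ≠ ⊥ → ∃ x : B, ⊥ < x ∧ x < b := by
  intro b hb
  by_contra hno
  push_neg at hno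
  -- b is an atom
  have hatom : ∀ c : B, b ⊓ c = ⊥ ∨ b ≤ c := by
    intro c
    by_cases hc : b ⊓ c = ⊥
    · exact Or.inl hc
    · right
      have h1 : ⊥ < b ⊓ c := bot_lt_iff_ne_bot.2 hc
      have h3 : b ⊓ c = b := (lt_or_eq_of_le inf_le_left).resolve_left (hno _ h1)
      exact inf_eq_left.1 h3
  have hsup : ∀ c d : B, b ≤ c ⊔ d ↔ b ≤ c ∨ b ≤ d := by
    intro c d
    constructor
    · intro hcd
      rcases hatom c with h | h
      · right
        have : b = (b ⊓ c) ⊔ (b ⊓ d) := by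
          rw [← inf_sup_left, inf_eq_left.2 hcd]
        rw [h, bot_sup_eq] at this
        exact inf_eq_left.1 this.symm
      · exact Or.inl h
    · rintro (h | h)
      · exact le_sup_of_le_left h
      · exact le_sup_of_le_right h
  have hcompl : ∀ c : B, b ≤ cᶜ ↔ ¬ b ≤ c := by
    intro c
    constructor
    · intro h1 h2
      exact hb (le_bot_iff.1 (le_inf h2 h1 |>.trans_eq inf_compl_eq_bot))
    · intro h1
      rcases hatom c with h | h
      · exact le_compl_iff_disjoint_right.2 (disjoint_iff.2 h)
      · exact absurd h h1
  -- the principal ultrafilter homomorphism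
  set gb : B → ULift.{v} Bool := fun c => if b ≤ c then ⊤ else ⊥ with hgb_def
  have hgb : IsBooleanHom gb := by
    refine ⟨fun c d => ?_, fun c d => ?_, fun c => ?_, ?_, ?_⟩
    · by_cases h1 : b ≤ c <;> by_cases h2 : b ≤ d <;>
        simp [hgb_def, h1, h2, le_inf_iff]
    · by_cases h1 : b ≤ c <;> by_cases h2 : b ≤ d <;>
        simp [hgb_def, h1, h2, hsup]
    · by_cases h1 : b ≤ c <;> simp [hgb_def, h1, hcompl]
    · simp [hgb_def, le_bot_iff, hb]
    · simp [hgb_def]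
  -- any Boolean hom to ULift Bool sending b to ⊤ computes principal values
  have hkey : ∀ (h : B → ULift.{v} Bool), IsBooleanHom h → h b = ⊤ →
      ∀ c : B, (h c = ⊤ ↔ b ≤ c) := by
    intro h hh hhb c
    constructor
    · intro hc
      rcases hatom c with h1 | h1
      · exfalso
        have : h (b ⊓ c) = ⊤ := by rw [hh.1, hhb, hc, top_inf_eq]
        rw [h1, hh.2.2.2.1] at this
        exact ulift_bool_bot_ne_top this
      · exact h1
    · intro hc
      have := hh.monotone hc
      rw [hhb, top_le_iff] at this
      exact this
  -- the embedding of ℕ and the test map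
  set e : ℕ ↪ X := Infinite.natEmbedding X with he_def
  set F : X → ConvSeq.{v} := fun x =>
    ⟨fun o => Option.elim o (if b ≤ ι x then ⊤ else ⊥)
        (fun n => if x = e n then (if b ≤ ι x then ⊥ else ⊤) else (if b ≤ ι x then ⊤ else ⊥)),
     by
      by_cases hx : ∃ m, x = e m
      · obtain ⟨m, hm⟩ := hx
        refine Filter.eventually_atTop.2 ⟨m + 1, fun n hn => ?_⟩
        have hne : x ≠ e n := by
          intro h
          have := e.injective (hm ▸ h : e m = e n)
          omega
        simp [hne]
      · refine Filter.Eventually.of_forall fun n => ?_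
        have hne : x ≠ e n := fun h => hx ⟨n, h⟩
        simp [hne]⟩ with hF_def
  obtain ⟨G, ⟨hG, hGι⟩, _⟩ := hfree (ConvSeq.{v}) F
  have hGF : ∀ x, G (ι x) = F x := fun x => congrFun hGι x
  -- the limit coordinate of G equals gb
  have hlim : (fun c : B => (G c).1 none) = gb := by
    obtain ⟨g', hg', hg'uniq⟩ := hfree (ULift.{v} Bool) (fun x => if b ≤ ι x then ⊤ else ⊥)
    have h1 : (fun c : B => (G c).1 none) = g' := by
      refine hg'uniq _ ⟨(ConvSeq.isBooleanHom_eval none).comp hG, ?_⟩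
      funext x
      show (G (ι x)).1 none = _
      rw [hGF x]
      rfl
    have h2 : gb = g' := hg'uniq _ ⟨hgb, rfl⟩
    rw [h1, h2]
  have hlimb : (G b).1 none = ⊤ := by
    have := congrFun hlim b
    simpa [hgb_def] using this
  -- each sequence coordinate of G at b is ⊥
  have hcoord : ∀ n : ℕ, (G b).1 (some n) = ⊥ := by
    intro n
    by_contra hcn
    have htop : (G b).1 (some n) = ⊤ := ulift_bool_ne_bot_eq_top hcn
    have hhom : IsBooleanHom (fun c : B => (G c).1 (some n)) :=
      (ConvSeq.isBooleanHom_eval (some n)).comp hG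
    have hiff := hkey _ hhom htop (ι (e n))
    have hval : (G (ι (e n))).1 (some n)
        = if b ≤ ι (e n) then (⊥ : ULift.{v} Bool) else ⊤ := by
      rw [hGF (e n)]
      show (if e n = e n then _ else _) = _
      rw [if_pos rfl]
    by_cases hle : b ≤ ι (e n)
    · have h2 : (G (ι (e n))).1 (some n) = ⊤ := hiff.2 hle
      rw [hval, if_pos hle] at h2
      exact ulift_bool_bot_ne_top h2
    · have h1 : (G (ι (e n))).1 (some n) = ⊤ := by rw [hval, if_neg hle]
      exact hle (hiff.1 h1)
  -- contradiction with convergence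
  obtain ⟨n, hn⟩ := (G b).2.exists
  rw [hcoord n, hlimb] at hn
  exact ulift_bool_bot_ne_top hn
end
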